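/- Let d, Q ≥ 1 and r ≥ 0 be integers, and consider the rooted d-tree T_r. If S is a nonempty set of unrooted vertices of T_r that minimizes dens_{T_r}(S) among all nonempty sets of unrooted vertices, and S has maximum cardinality among such minimizers, then for every 1 ≤ i ≤ Q either S ∩ σ_i = ∅ or σ_i ⊆ S; that is, S is a union of some of the blocks σ_1, …, σ_Q. -/

import Mathlib

/-- The block `σ_i = {id+1, id+2, …, (i+1)d}` of vertices. -/
def sigmaB (d i : ℕ) : Finset ℕ := Finset.Icc (i * d + 1) ((i + 1) * d)

/-- The `d`-tree `T_0` on vertex set `{1, …, d(Q+1)}`: its simplices are the nonempty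
subsets `σ` with `max σ − min σ ≤ d` (equivalently, `a ≤ b + d` for all `a, b ∈ σ`). -/
def T0 (d Q : ℕ) : Finset (Finset ℕ) :=
  (Finset.Icc 1 (d * (Q + 1))).powerset.filter
    (fun σ => σ.Nonempty ∧ ∀ a ∈ σ, ∀ b ∈ σ, a ≤ b + d)

/-- The `k`-th attached root vertex (for `k = 0, 1, …`): a fresh vertex label. -/
def rootVtx (d Q k : ℕ) : ℕ := d * (Q + 1) + k + 1

/-- The index of the block to which the `k`-th root vertex is attached in `T_r`
(`k = 0, …, r−1`).  Writing `r = aQ + b` with `b = r % Q`, the first `b` vertices are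
attached to `σ_{⌈Q/b⌉}, σ_{⌈2Q/b⌉}, …, σ_{⌈bQ/b⌉} = σ_Q` (coming from the base case
`T_b`), and the remaining `aQ` vertices are attached cyclically to `σ_1, …, σ_Q`
(`a` full rounds), corresponding to the recursion `T_r = T_{r−Q} + (σ_1, …, σ_Q)`. -/
def target (Q r k : ℕ) : ℕ :=
  if k < r % Q then ((k + 1) * Q + (r % Q) - 1) / (r % Q)
  else (k - r % Q) % Q + 1

/-- The rooted `d`-tree `T_r`: the complex `T_0` together with, for each `k < r`, the
root vertex `rootVtx d Q k` attached to the `(d−1)`-simplex `σ_{target Q r k}`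
(attaching adds all sets `τ ∪ {v}` for `τ ⊆ σ`). -/
def Tr (d Q r : ℕ) : Finset (Finset ℕ) :=
  T0 d Q ∪ (Finset.range r).biUnion
    (fun k => (sigmaB d (target Q r k)).powerset.image (insert (rootVtx d Q k)))

/-- The set of vertex roots of `T_r`. -/
def rootSet (d Q r : ℕ) : Finset ℕ := (Finset.range r).image (rootVtx d Q)

/-- `e_C(S)`: the number of nonempty simplices of `C` with at least one vertex in `S`. -/
def eCount (C : Finset (Finset ℕ)) (S : Finset ℕ) : ℕ :=
  (C.filter (fun σ => σ.Nonempty ∧ (σ ∩ S).Nonempty)).card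

/-- The density `dens_C(S) = e_C(S)/|S|`. -/
noncomputable def dens (C : Finset (Finset ℕ)) (S : Finset ℕ) : ℝ :=
  (eCount C S : ℝ) / (S.card : ℝ)

/-- The vertex set of a complex. -/
def verts (C : Finset (Finset ℕ)) : Finset ℕ := C.sup id

/-- The unrooted vertices of `T_r`: all vertices except the simplex root `σ_0` and the
vertex roots. -/
def unrooted (d Q r : ℕ) : Finset ℕ :=
  verts (Tr d Q r) \ (sigmaB d 0 ∪ rootSet d Q r)

/- ################ auxiliary development ################ -/

namespace TrAux

open Finset

lemma card_sigmaB (d i : ℕ) : (sigmaB d i).card = d := by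
  simp [sigmaB, Nat.card_Icc]; ring_nf; omega

lemma sigmaB_subset (d Q i : ℕ) (hi : i ≤ Q) : sigmaB d i ⊆ Finset.Icc 1 (d * (Q + 1)) := by
  intro v hv
  simp only [sigmaB, mem_Icc] at hv ⊢
  constructor
  · omega
  · calc v ≤ (i+1) * d := hv.2
      _ ≤ (Q+1) * d := by exact Nat.mul_le_mul_right d (by omega)
      _ = d * (Q+1) := by ring

/-- number of subsets of `A` meeting `S`. -/
lemma card_powerset_filter_inter (A S : Finset ℕ) :
    ((A.powerset.filter (fun τ => (τ ∩ S).Nonempty))).card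
      = 2 ^ A.card - 2 ^ (A.card - (A ∩ S).card) := by
  have hneg : A.powerset.filter (fun τ => ¬ (τ ∩ S).Nonempty) = (A \ S).powerset := by
    ext τ
    simp only [mem_filter, mem_powerset, Finset.not_nonempty_iff_eq_empty]
    constructor
    · rintro ⟨h1, h2⟩ x hx
      simp only [mem_sdiff]
      refine ⟨h1 hx, fun hxS => ?_⟩
      have : x ∈ τ ∩ S := mem_inter.2 ⟨hx, hxS⟩
      simp [h2] at this
    · intro h
      constructor
      · exact h.trans (sdiff_subset)
      · rw [Finset.eq_empty_iff_forall_notMem]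
        intro x hx
        rcases mem_inter.1 hx with ⟨h1, h2⟩
        have := h h1
        simp only [mem_sdiff] at this
        exact this.2 h2
  have htot := Finset.card_filter_add_card_filter_not
      (s := A.powerset) (p := fun τ => (τ ∩ S).Nonempty)
  rw [hneg, card_powerset, card_powerset] at htot
  have hsd : (A \ S).card = A.card - (A ∩ S).card := by
    have := Finset.card_inter_add_card_sdiff A S
    omega
  rw [hsd] at htot
  have hle : 2 ^ (A.card - (A ∩ S).card) ≤ 2 ^ A.card :=
    Nat.pow_le_pow_right (by norm_num) (by omega)
  omega

lemma card_image_insert (v : ℕ) (P : Finset (Finset ℕ)) (h : ∀ τ ∈ P, v ∉ τ) :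
    (P.image (insert v)).card = P.card := by
  apply Finset.card_image_of_injOn
  intro τ₁ h1 τ₂ h2 heq
  have := congrArg (fun s => Finset.erase s v) heq
  simpa [Finset.erase_insert (h _ h1), Finset.erase_insert (h _ h2)] using this

/-- concavity: `t * (2^d - 1) ≤ d * (2^d - 2^(d-t))` for `t ≤ d`. -/
lemma concav (d t : ℕ) (ht : t ≤ d) : t * (2 ^ d - 1) ≤ d * (2 ^ d - 2 ^ (d - t)) := by
  obtain ⟨u, rfl⟩ : ∃ u, d = t + u := ⟨d - t, by omega⟩
  have hdt : t + u - t = u := by omega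
  rw [hdt]
  have h2t : 1 ≤ 2 ^ t := Nat.one_le_two_pow
  have h2u : 1 ≤ 2 ^ u := Nat.one_le_two_pow
  have hle : (2:ℕ) ^ u ≤ 2 ^ (t + u) := Nat.pow_le_pow_right (by norm_num) (by omega)
  have h1 : (1:ℕ) ≤ 2 ^ (t + u) := Nat.one_le_two_pow
  zify [hle, h1]
  have hpow : ((2:ℤ)) ^ (t + u) = 2 ^ t * 2 ^ u := by rw [pow_add]
  have ht2 : (t : ℤ) + 1 ≤ 2 ^ t := by exact_mod_cast (Nat.lt_two_pow_self (n := t))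
  have hY : (1:ℤ) ≤ 2 ^ u := by exact_mod_cast h2u
  rw [hpow]
  rcases Nat.eq_zero_or_pos u with rfl | hupos
  · norm_num
  · have hu1 : (1:ℤ) ≤ (u:ℤ) := by exact_mod_cast hupos
    have e1 : (0:ℤ) ≤ (u:ℤ) * 2^u := by positivity
    have e2 : (0:ℤ) ≤ (2:ℤ)^t - 1 - t := by linarith
    have e3 : (0:ℤ) ≤ (2:ℤ)^u - 1 := by linarith
    have e4 : (0:ℤ) ≤ (t:ℤ) := by positivity
    nlinarith [mul_nonneg e1 e2, mul_nonneg e4 e3, mul_nonneg (by nlinarith [mul_nonneg (by linarith : (0:ℤ) ≤ (u:ℤ) - 1) (by positivity : (0:ℤ) ≤ (2:ℤ)^u)] : (0:ℤ) ≤ (u:ℤ)*2^u - 2^u) (by linarith : (0:ℤ) ≤ (2:ℤ)^t - 1)]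


/-! ### blocks and special indices -/

/-- block index of a vertex -/
def blk (d v : ℕ) : ℕ := (v - 1) / d

lemma mem_sigmaB_iff (d i v : ℕ) (hd : 1 ≤ d) (hv : 1 ≤ v) :
    v ∈ sigmaB d i ↔ blk d v = i := by
  obtain ⟨w, rfl⟩ : ∃ w, v = w + 1 := ⟨v - 1, by omega⟩
  have hdm := Nat.div_add_mod w d
  have hcomm : d * (w / d) = (w / d) * d := Nat.mul_comm _ _
  have hlt : w % d < d := Nat.mod_lt _ (by omega)
  have hq1 : (w / d) * d ≤ w := Nat.div_mul_le_self w d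
  have hq2 : (w / d) * d + d = (w / d + 1) * d := by ring
  simp only [sigmaB, mem_Icc, blk, Nat.add_sub_cancel]
  constructor
  · intro ⟨ha, hb⟩
    apply Nat.div_eq_of_lt_le
    · omega
    · have : (i + 1) * d = i * d + d := by ring
      omega
  · intro h
    subst h
    have : (w / d + 1) * d = (w / d) * d + d := by ring
    omega

lemma blk_bounds (d Q v : ℕ) (hd : 1 ≤ d) (hv : v ∈ Finset.Icc (d+1) (d*(Q+1))) :
    1 ≤ blk d v ∧ blk d v ≤ Q := by
  simp only [mem_Icc] at hv
  obtain ⟨w, rfl⟩ : ∃ w, v = w + 1 := ⟨v - 1, by omega⟩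
  unfold blk
  simp only [Nat.add_sub_cancel]
  constructor
  · rw [Nat.one_le_div_iff (by omega)]; omega
  · have : w / d < Q + 1 := by
      rw [Nat.div_lt_iff_lt_mul (by omega)]
      have : (Q + 1) * d = d * (Q + 1) := by ring
      omega
    omega

lemma sigmaB_eq_blk_filter (d Q i : ℕ) (hd : 1 ≤ d) (T : Finset ℕ)
    (hT : T ⊆ Finset.Icc (d+1) (d*(Q+1))) :
    T.filter (fun v => blk d v = i) = T ∩ sigmaB d i := by
  ext v
  simp only [mem_filter, mem_inter]
  constructor
  · intro ⟨h1, h2⟩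
    refine ⟨h1, ?_⟩
    rw [mem_sigmaB_iff d i v hd]
    · exact h2
    · have := hT h1; simp only [mem_Icc] at this; omega
  · intro ⟨h1, h2⟩
    refine ⟨h1, ?_⟩
    rw [← mem_sigmaB_iff d i v hd]
    · exact h2
    · have := hT h1; simp only [mem_Icc] at this; omega

/-- sum of block intersections equals the total -/
lemma sum_blocks_card (d Q : ℕ) (hd : 1 ≤ d) (T : Finset ℕ)
    (hT : T ⊆ Finset.Icc (d+1) (d*(Q+1))) :
    ∑ i ∈ Finset.Icc 1 Q, (T ∩ sigmaB d i).card = T.card := by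
  rw [Finset.card_eq_sum_card_fiberwise (f := blk d) (t := Finset.Icc 1 Q)]
  · apply Finset.sum_congr rfl
    intro i _
    rw [sigmaB_eq_blk_filter d Q i hd T hT]
  · intro v hv
    have := blk_bounds d Q v hd (hT hv)
    rw [Finset.mem_coe, mem_Icc]; omega

/-- the special block index `⌈jQ/b⌉`. -/
def Ispec (Q b j : ℕ) : ℕ := (j * Q + b - 1) / b

lemma Ispec_mul_ge (Q b j : ℕ) (hb : 1 ≤ b) : j * Q ≤ b * Ispec Q b j := by
  unfold Ispec
  have h := Nat.div_add_mod (j * Q + b - 1) b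
  have h2 : (j * Q + b - 1) % b < b := Nat.mod_lt _ (by omega)
  omega

lemma Ispec_mul_le (Q b j : ℕ) (hb : 1 ≤ b) : b * Ispec Q b j ≤ j * Q + b - 1 := by
  unfold Ispec
  exact Nat.mul_div_le (j * Q + b - 1) b

lemma Ispec_lt_of_lt (Q b j j' : ℕ) (hb : 1 ≤ b) (hbQ : b ≤ Q) (h : j < j') :
    Ispec Q b j < Ispec Q b j' := by
  have h1 := Ispec_mul_ge Q b j' hb
  have h2 := Ispec_mul_le Q b j hb
  have e1 : (j + 1) * Q ≤ j' * Q := Nat.mul_le_mul_right _ (by omega)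
  have e2 : (j + 1) * Q = j * Q + Q := by ring
  have hlt : b * Ispec Q b j < b * Ispec Q b j' := by omega
  exact lt_of_mul_lt_mul_left hlt (by omega)

lemma Ispec_le_iff (Q b j j' : ℕ) (hb : 1 ≤ b) (hbQ : b ≤ Q) :
    Ispec Q b j ≤ Ispec Q b j' ↔ j ≤ j' := by
  constructor
  · intro h
    by_contra hc
    have := Ispec_lt_of_lt Q b j' j hb hbQ (by omega)
    omega
  · intro h
    rcases Nat.eq_or_lt_of_le h with rfl | h
    · exact le_rfl
    · exact (Ispec_lt_of_lt Q b j j' hb hbQ h).le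

lemma Ispec_pos (Q b j : ℕ) (hb : 1 ≤ b) (hQ : 1 ≤ Q) (hj : 1 ≤ j) : 1 ≤ Ispec Q b j := by
  have h1 := Ispec_mul_ge Q b j hb
  have h2 : Q ≤ j * Q := Nat.le_mul_of_pos_left Q (by omega)
  rcases Nat.eq_zero_or_pos (Ispec Q b j) with h | h
  · rw [h, Nat.mul_zero] at h1; omega
  · omega

lemma Ispec_le_Q (Q b j : ℕ) (hb : 1 ≤ b) (hj : j ≤ b) : Ispec Q b j ≤ Q := by
  have h1 := Ispec_mul_le Q b j hb
  have h2 : j * Q ≤ b * Q := Nat.mul_le_mul_right _ hj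
  by_contra hc
  have h3 : b * (Q + 1) ≤ b * Ispec Q b j := Nat.mul_le_mul_left _ (by omega)
  have h4 : b * (Q + 1) = b * Q + b := by ring
  omega

/-! ### the special-vertex predicate and the two per-gap inequalities -/

/-- `v` lies in a special block. -/
def specP (d Q b v : ℕ) : Prop := blk d v ∈ (Finset.Icc 1 b).image (Ispec Q b)

instance (d Q b v : ℕ) : Decidable (specP d Q b v) := by
  unfold specP; infer_instance

lemma blk_le_blk (d u v : ℕ) (h : u ≤ v) : blk d u ≤ blk d v :=
  Nat.div_le_div_right (by omega)

lemma mem_sigmaB_of_spec (d Q b v : ℕ) (hd : 1 ≤ d) (hv : 1 ≤ v) (h : specP d Q b v) :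
    ∃ j, 1 ≤ j ∧ j ≤ b ∧ v ∈ sigmaB d (Ispec Q b j) := by
  obtain ⟨j, hj, hblk⟩ := Finset.mem_image.1 h
  simp only [mem_Icc] at hj
  exact ⟨j, hj.1, hj.2, (mem_sigmaB_iff d _ v hd hv).2 hblk.symm⟩

/-- grounded gap inequality: if `F = Icc (d+1) w`, then `Q·|F ∩ special| ≤ b·|F|`. -/
lemma gap_grounded (d Q b w : ℕ) (hd : 1 ≤ d) (hb : 1 ≤ b) (hbQ : b < Q) :
    Q * ((Finset.Icc (d+1) w).filter (specP d Q b)).card ≤ b * (Finset.Icc (d+1) w).card := by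
  set F := Finset.Icc (d+1) w with hF
  set G := F.filter (specP d Q b) with hG
  rcases Finset.eq_empty_or_nonempty G with h | hGne
  · simp [h]
  have hcard : F.card = w + 1 - (d + 1) := Nat.card_Icc _ _
  set y := G.max' hGne with hy
  have hyG : y ∈ G := G.max'_mem hGne
  have hymax : ∀ u ∈ G, u ≤ y := fun u hu => G.le_max' u hu
  have hyF : y ∈ F := (Finset.mem_filter.1 hyG).1
  have hyspec : specP d Q b y := (Finset.mem_filter.1 hyG).2
  have hyIcc : d + 1 ≤ y ∧ y ≤ w := by
    have := hyF; rw [hF] at this; exact Finset.mem_Icc.1 this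
  obtain ⟨j, hj1, hjb, hysig⟩ := mem_sigmaB_of_spec d Q b y hd (by omega) hyspec
  set I := Ispec Q b j with hI
  have hysig' := Finset.mem_Icc.1 hysig
  -- G ⊆ (lower special blocks) ∪ (part of block I up to w)
  have hGsub : G ⊆ ((Finset.Icc 1 (j-1)).biUnion (fun j' => sigmaB d (Ispec Q b j')))
      ∪ Finset.Icc (I * d + 1) (min (I * d + d) w) := by
    intro u hu
    have huF : u ∈ F := (Finset.mem_filter.1 hu).1
    have huIcc := Finset.mem_Icc.1 (hF ▸ huF)
    obtain ⟨j', hj'1, hj'b, husig⟩ :=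
      mem_sigmaB_of_spec d Q b u hd (by omega) (Finset.mem_filter.1 hu).2
    have hley : u ≤ y := hymax u hu
    have hblkle : blk d u ≤ blk d y := blk_le_blk d u y hley
    have hIle : Ispec Q b j' ≤ I := by
      rw [← (mem_sigmaB_iff d _ u hd (by omega)).1 husig,
          ← (mem_sigmaB_iff d _ y hd (by omega)).1 hysig]
      exact hblkle
    have hj'j : j' ≤ j := (Ispec_le_iff Q b j' j hb (by omega)).1 hIle
    rcases Nat.lt_or_ge j' j with hlt | hge
    · apply Finset.mem_union_left
      exact Finset.mem_biUnion.2 ⟨j', Finset.mem_Icc.2 ⟨hj'1, by omega⟩, husig⟩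
    · have hj'eq : j' = j := by omega
      apply Finset.mem_union_right
      have husig2 : u ∈ sigmaB d I := by rw [hI, ← hj'eq]; exact husig
      have hu2 := Finset.mem_Icc.1 husig2
      have h1 : (I + 1) * d = I * d + d := by ring
      rw [Finset.mem_Icc]
      omega
  have hcardG : G.card ≤ (j - 1) * d + min d (w - I * d) := by
    calc G.card ≤ (((Finset.Icc 1 (j-1)).biUnion (fun j' => sigmaB d (Ispec Q b j')))
        ∪ Finset.Icc (I * d + 1) (min (I * d + d) w)).card := Finset.card_le_card hGsub
      _ ≤ ((Finset.Icc 1 (j-1)).biUnion (fun j' => sigmaB d (Ispec Q b j'))).card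
          + (Finset.Icc (I * d + 1) (min (I * d + d) w)).card := Finset.card_union_le _ _
      _ ≤ (j - 1) * d + min d (w - I * d) := by
          gcongr
          · calc ((Finset.Icc 1 (j-1)).biUnion (fun j' => sigmaB d (Ispec Q b j'))).card
                ≤ ∑ j' ∈ Finset.Icc 1 (j-1), (sigmaB d (Ispec Q b j')).card :=
                  Finset.card_biUnion_le
              _ = (j - 1) * d := by
                  rw [Finset.sum_congr rfl (fun j' _ => card_sigmaB d _)]
                  simp [Nat.card_Icc, Nat.mul_comm]
          · rw [Nat.card_Icc]; omega
  -- now pure arithmetic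
  have hbI : j * Q ≤ b * I := Ispec_mul_ge Q b j hb
  have hI1 : 1 ≤ I := Ispec_pos Q b j hb (by omega) hj1
  set z := min d (w - I * d) with hz
  have hz1 : z ≤ d := by omega
  have hz2 : z ≤ w - I * d := by omega
  have hwy : I * d + 1 ≤ w := by omega
  rw [hcard]
  have hQc : Q * G.card ≤ Q * ((j-1) * d + z) := Nat.mul_le_mul_left _ hcardG
  refine le_trans hQc ?_
  -- b * (w + 1 - (d+1)) ≥ Q * ((j-1)*d + z)
  zify [hwy, hz2, (by omega : d + 1 ≤ w + 1), hj1]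
  have hwz : (I : ℤ) * d + z ≤ w := by
    have : (z:ℤ) ≤ (w:ℤ) - (I*d : ℕ) := by
      have := hz2
      omega
    push_cast at this ⊢
    omega
  have hbIz : (j : ℤ) * Q ≤ (b:ℤ) * I := by exact_mod_cast hbI
  have hQb : (b:ℤ) + 1 ≤ Q := by exact_mod_cast hbQ
  have hprod : (0:ℤ) ≤ ((Q:ℤ) - b) * ((d:ℤ) - z) := by
    apply mul_nonneg <;> [omega; skip]
    have : (z:ℤ) ≤ d := by exact_mod_cast hz1
    omega
  nlinarith [mul_le_mul_of_nonneg_left hwz (by positivity : (0:ℤ) ≤ (b:ℤ)),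
    mul_le_mul_of_nonneg_right hbIz (by positivity : (0:ℤ) ≤ (d:ℤ))]

lemma gap_free_arith (Q b d g c L m : ℤ) (hQb : b + 1 ≤ Q) (hb1 : 1 ≤ b) (hd1 : 1 ≤ d)
    (hm0 : 0 ≤ m) (hc0 : 0 ≤ c) (hgd : d < g) (hfill : c + d * (L - m) ≤ g)
    (hbL : m * Q - b + 1 ≤ b * L) (hcm : c ≤ (m + 1) * d) : Q * c ≤ Q * d + b * g := by
  nlinarith [mul_nonneg (by linarith : (0:ℤ) ≤ Q - b) (by linarith : (0:ℤ) ≤ (m+1)*d - c),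
    mul_le_mul_of_nonneg_left hfill (by linarith : (0:ℤ) ≤ b),
    mul_le_mul_of_nonneg_left hbL (by linarith : (0:ℤ) ≤ d),
    mul_nonneg hm0 (by linarith : (0:ℤ) ≤ Q - b)]

set_option maxHeartbeats 1000000 in
/-- ungrounded gap inequality: if the gap is `Ioc x w` with `x ∈ S`,
`Q·|gap ∩ special| ≤ Q·min d (w-x) + b·|gap|`. -/
lemma gap_free (d Q b x w : ℕ) (hd : 1 ≤ d) (hb : 1 ≤ b) (hbQ : b < Q) (hx : 1 ≤ x) :
    Q * ((Finset.Ioc x w).filter (specP d Q b)).card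
      ≤ Q * min d (w - x) + b * (Finset.Ioc x w).card := by
  set F := Finset.Ioc x w with hF
  set G := F.filter (specP d Q b) with hG
  rcases Finset.eq_empty_or_nonempty G with h | hGne
  · simp [h]
  have hcard : F.card = w - x := Nat.card_Ioc _ _
  have hGF : G ⊆ F := Finset.filter_subset _ _
  have hcG : G.card ≤ w - x := hcard ▸ Finset.card_le_card hGF
  set g := w - x with hg
  -- case g ≤ d : trivial since |G| ≤ g = min d g
  rcases le_or_gt g d with hgd | hdg
  · have : min d g = g := by omega
    rw [this, hcard]
    have : Q * G.card ≤ Q * g := Nat.mul_le_mul_left _ hcG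
    omega
  -- case g > d
  have hmin : min d g = d := by omega
  rw [hmin, hcard]
  set y₁ := G.min' hGne with hy₁
  set y₂ := G.max' hGne with hy₂
  have hy₁G : y₁ ∈ G := G.min'_mem hGne
  have hy₂G : y₂ ∈ G := G.max'_mem hGne
  have hy₁F := Finset.mem_Ioc.1 (hF ▸ hGF hy₁G)
  have hy₂F := Finset.mem_Ioc.1 (hF ▸ hGF hy₂G)
  obtain ⟨j₁, hj₁1, hj₁b, hy₁sig⟩ :=
    mem_sigmaB_of_spec d Q b y₁ hd (by omega) (Finset.mem_filter.1 hy₁G).2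
  obtain ⟨j₂, hj₂1, hj₂b, hy₂sig⟩ :=
    mem_sigmaB_of_spec d Q b y₂ hd (by omega) (Finset.mem_filter.1 hy₂G).2
  set I₁ := Ispec Q b j₁ with hI₁
  set I₂ := Ispec Q b j₂ with hI₂
  have hy₁s := Finset.mem_Icc.1 hy₁sig
  have hy₂s := Finset.mem_Icc.1 hy₂sig
  have hy12 : y₁ ≤ y₂ := G.min'_le y₂ hy₂G |>.trans (le_refl _)
  have hI12 : I₁ ≤ I₂ := by
    have h1 := (mem_sigmaB_iff d I₁ y₁ hd (by omega)).1 hy₁sig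
    have h2 := (mem_sigmaB_iff d I₂ y₂ hd (by omega)).1 hy₂sig
    rw [← h1, ← h2]
    exact blk_le_blk d y₁ y₂ hy12
  have hj12 : j₁ ≤ j₂ := (Ispec_le_iff Q b j₁ j₂ hb (by omega)).1 hI12
  -- bound |G| ≤ (j₂ - j₁ + 1) * d
  have hcG2 : G.card ≤ (j₂ - j₁ + 1) * d := by
    have hsub : G ⊆ (Finset.Icc j₁ j₂).biUnion (fun j' => sigmaB d (Ispec Q b j')) := by
      intro u hu
      have huF := Finset.mem_Ioc.1 (hF ▸ hGF hu)
      obtain ⟨j', hj'1, hj'b, husig⟩ :=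
        mem_sigmaB_of_spec d Q b u hd (by omega) (Finset.mem_filter.1 hu).2
      have hub : y₁ ≤ u := G.min'_le u hu
      have hut : u ≤ y₂ := G.le_max' u hu
      have e1 : I₁ ≤ Ispec Q b j' := by
        rw [← (mem_sigmaB_iff d _ y₁ hd (by omega)).1 hy₁sig,
            ← (mem_sigmaB_iff d _ u hd (by omega)).1 husig]
        exact blk_le_blk d y₁ u hub
      have e2 : Ispec Q b j' ≤ I₂ := by
        rw [← (mem_sigmaB_iff d _ u hd (by omega)).1 husig,
            ← (mem_sigmaB_iff d _ y₂ hd (by omega)).1 hy₂sig]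
        exact blk_le_blk d u y₂ hut
      have f1 : j₁ ≤ j' := (Ispec_le_iff Q b j₁ j' hb (by omega)).1 e1
      have f2 : j' ≤ j₂ := (Ispec_le_iff Q b j' j₂ hb (by omega)).1 e2
      exact Finset.mem_biUnion.2 ⟨j', Finset.mem_Icc.2 ⟨f1, f2⟩, husig⟩
    calc G.card ≤ ((Finset.Icc j₁ j₂).biUnion (fun j' => sigmaB d (Ispec Q b j'))).card :=
          Finset.card_le_card hsub
      _ ≤ ∑ j' ∈ Finset.Icc j₁ j₂, (sigmaB d (Ispec Q b j')).card := Finset.card_biUnion_le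
      _ = (j₂ - j₁ + 1) * d := by
          rw [Finset.sum_congr rfl (fun j' _ => card_sigmaB d _)]
          simp [Nat.card_Icc, Nat.mul_comm]
          omega
  -- the filling bound : g ≥ |G| + d * ((I₂ - I₁) - (j₂ - j₁))
  have hfill : G.card + d * ((I₂ - I₁) - (j₂ - j₁)) ≤ g := by
    set NB := (Finset.Ioo I₁ I₂) \ ((Finset.Icc 1 b).image (Ispec Q b)) with hNB
    set H := NB.biUnion (sigmaB d) with hH
    have hHF : H ⊆ F := by
      intro v hv
      obtain ⟨i, hiNB, hvi⟩ := Finset.mem_biUnion.1 hv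
      have hiIoo := Finset.mem_Ioo.1 (Finset.mem_sdiff.1 hiNB).1
      have hvs := Finset.mem_Icc.1 hvi
      rw [hF, Finset.mem_Ioc]
      have e1 : (I₁ + 1) * d ≤ i * d := Nat.mul_le_mul_right _ (by omega)
      have e2 : (i + 1) * d ≤ I₂ * d := Nat.mul_le_mul_right _ (by omega)
      have e3 : (I₁ + 1) * d = I₁ * d + d := by ring
      have e4 : y₁ ≤ (I₁ + 1) * d := by rw [e3]; omega
      constructor
      · omega
      · omega
    have hHG : Disjoint H G := by
      rw [Finset.disjoint_left]
      intro v hv hvG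
      obtain ⟨i, hiNB, hvi⟩ := Finset.mem_biUnion.1 hv
      obtain ⟨hiIoo, hinotim⟩ := Finset.mem_sdiff.1 hiNB
      have hiIoo' := Finset.mem_Ioo.1 hiIoo
      have hI₁pos : 1 ≤ I₁ := Ispec_pos Q b j₁ hb (by omega) hj₁1
      have hv1 : 1 ≤ v := by
        have := Finset.mem_Icc.1 hvi
        have : 1 ≤ i * d + 1 := by omega
        omega
      have hblkv : blk d v = i := (mem_sigmaB_iff d i v hd hv1).1 hvi
      have : specP d Q b v := (Finset.mem_filter.1 hvG).2
      unfold specP at this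
      rw [hblkv] at this
      exact hinotim this
    have hdisj : ((NB : Finset ℕ) : Set ℕ).PairwiseDisjoint (sigmaB d) := by
      intro i₁ h1 i₂ h2 hne
      apply Finset.disjoint_left.2
      intro v hv1 hv2
      have hv1' := Finset.mem_Icc.1 hv1
      have hvpos : 1 ≤ v := by omega
      have := (mem_sigmaB_iff d i₁ v hd hvpos).1 hv1
      have := (mem_sigmaB_iff d i₂ v hd hvpos).1 hv2
      exact hne (by omega)
    have hHcard : H.card = NB.card * d := by
      rw [hH, Finset.card_biUnion hdisj]
      rw [Finset.sum_congr rfl (fun i _ => card_sigmaB d i)]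
      simp [Finset.sum_const, Nat.smul_one_eq_cast]
    have hNBcard : (I₂ - I₁) - (j₂ - j₁) ≤ NB.card := by
      have h1 : (Finset.Ioo I₁ I₂).card = I₂ - I₁ - 1 := Nat.card_Ioo _ _
      have h2 : ((Finset.Ioo I₁ I₂) ∩ ((Finset.Icc 1 b).image (Ispec Q b))).card
          ≤ j₂ - j₁ - 1 := by
        rcases Nat.eq_or_lt_of_le hj12 with rfl | hj12'
        ·
          have : I₂ = I₁ := rfl
          simp [this]
        · have hsub2 : (Finset.Ioo I₁ I₂) ∩ ((Finset.Icc 1 b).image (Ispec Q b))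
              ⊆ (Finset.Ioo j₁ j₂).image (Ispec Q b) := by
            intro i hi
            obtain ⟨hiIoo, hiim⟩ := Finset.mem_inter.1 hi
            obtain ⟨j', hj', hij'⟩ := Finset.mem_image.1 hiim
            have hj'Icc := Finset.mem_Icc.1 hj'
            have hio := Finset.mem_Ioo.1 hiIoo
            have f1 : j₁ < j' := by
              by_contra hc
              have : Ispec Q b j' ≤ I₁ := (Ispec_le_iff Q b j' j₁ hb (by omega)).2 (by omega)
              omega
            have f2 : j' < j₂ := by
              by_contra hc
              have : I₂ ≤ Ispec Q b j' := (Ispec_le_iff Q b j₂ j' hb (by omega)).2 (by omega)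
              omega
            exact Finset.mem_image.2 ⟨j', Finset.mem_Ioo.2 ⟨f1, f2⟩, hij'⟩
          calc ((Finset.Ioo I₁ I₂) ∩ ((Finset.Icc 1 b).image (Ispec Q b))).card
              ≤ ((Finset.Ioo j₁ j₂).image (Ispec Q b)).card := Finset.card_le_card hsub2
            _ ≤ (Finset.Ioo j₁ j₂).card := Finset.card_image_le
            _ = j₂ - j₁ - 1 := Nat.card_Ioo _ _
      have h3 : NB.card + ((Finset.Ioo I₁ I₂) ∩ ((Finset.Icc 1 b).image (Ispec Q b))).card
          = (Finset.Ioo I₁ I₂).card := by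
        rw [hNB]
        exact Finset.card_sdiff_add_card_inter _ _
      rcases Nat.eq_or_lt_of_le hj12 with rfl | hj12'
      · omega
      · have hII : I₁ < I₂ := Ispec_lt_of_lt Q b j₁ j₂ hb (by omega) hj12'
        omega
    have hunion : (G ∪ H).card ≤ F.card := Finset.card_le_card (Finset.union_subset hGF hHF)
    rw [Finset.card_union_of_disjoint hHG.symm] at hunion
    have : d * ((I₂ - I₁) - (j₂ - j₁)) ≤ H.card := by
      rw [hHcard]
      calc d * ((I₂ - I₁) - (j₂ - j₁)) = ((I₂ - I₁) - (j₂ - j₁)) * d := Nat.mul_comm _ _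
        _ ≤ NB.card * d := Nat.mul_le_mul_right _ hNBcard
    omega
  -- final arithmetic in ℤ
  have hbI₂ : j₂ * Q ≤ b * I₂ := Ispec_mul_ge Q b j₂ hb
  have hbI₁ : b * I₁ ≤ j₁ * Q + b - 1 := Ispec_mul_le Q b j₁ hb
  set c := G.card with hc
  set L : ℤ := (I₂ : ℤ) - (I₁ : ℤ) with hL
  set m : ℤ := (j₂ : ℤ) - (j₁ : ℤ) with hm
  have hm0 : (0:ℤ) ≤ m := by
    rw [hm]
    have h : (j₁:ℤ) ≤ j₂ := by exact_mod_cast hj12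
    linarith
  have hL0 : (0:ℤ) ≤ L := by
    rw [hL]
    have h : (I₁:ℤ) ≤ I₂ := by exact_mod_cast hI12
    linarith
  have hfillz : (c : ℤ) + d * (L - m) ≤ g := by
    rcases le_or_gt (I₂ - I₁) (j₂ - j₁) with hcase | hcase
    · have hLm : L ≤ m := by
        rw [hL, hm]
        have h1 : (I₂:ℤ) ≤ I₁ + (j₂ - j₁ : ℕ) := by
          have : I₂ ≤ I₁ + (j₂ - j₁) := by omega
          exact_mod_cast this
        have h2 : ((j₂ - j₁ : ℕ) : ℤ) = (j₂:ℤ) - j₁ := by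
          have : j₁ ≤ j₂ := hj12
          push_cast
          omega
        linarith
      have hcg : (c:ℤ) ≤ g := by exact_mod_cast hcG
      have hd0 : (0:ℤ) ≤ d := by positivity
      nlinarith
    · have heq : (((I₂ - I₁) - (j₂ - j₁) : ℕ) : ℤ) = L - m := by
        rw [hL, hm]; push_cast; omega
      have h5 : (c : ℤ) + d * (((I₂ - I₁) - (j₂ - j₁) : ℕ) : ℤ) ≤ g := by
        exact_mod_cast hfill
      rw [heq] at h5
      exact h5
  have hbL : (m : ℤ) * Q - b + 1 ≤ b * L := by
    rw [hL, hm]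
    have h1 : (j₂:ℤ) * Q ≤ b * I₂ := by exact_mod_cast hbI₂
    have h2 : (b:ℤ) * I₁ ≤ (j₁:ℤ) * Q + b - 1 := by
      have h3 : ((j₁ * Q + b - 1 : ℕ) : ℤ) = (j₁:ℤ) * Q + b - 1 := by push_cast; omega
      calc (b:ℤ) * I₁ = ((b * I₁ : ℕ):ℤ) := by push_cast; ring
        _ ≤ ((j₁ * Q + b - 1 : ℕ):ℤ) := by exact_mod_cast hbI₁
        _ = (j₁:ℤ) * Q + b - 1 := h3
    nlinarith
  have hcm : (c : ℤ) ≤ (m + 1) * d := by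
    have h6 : ((j₂ - j₁ + 1 : ℕ) : ℤ) = m + 1 := by rw [hm]; push_cast; omega
    have h7 : (c : ℤ) ≤ ((j₂ - j₁ + 1 : ℕ) : ℤ) * d := by exact_mod_cast hcG2
    rw [h6] at h7
    exact h7
  have hfin := gap_free_arith (Q:ℤ) (b:ℤ) (d:ℤ) (g:ℤ) (c:ℤ) L m
    (by exact_mod_cast hbQ) (by exact_mod_cast hb) (by exact_mod_cast hd)
    hm0 (Int.natCast_nonneg _) (by exact_mod_cast hdg) hfillz hbL hcm
  have : (Q * c : ℤ) ≤ ((Q * d + b * g : ℕ) : ℤ) := by push_cast; linarith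
  exact_mod_cast this

/-- key of a vertex: the largest element of `S` below it (0 if none). -/
def kap (S : Finset ℕ) (v : ℕ) : ℕ :=
  if h : (S.filter (· < v)).Nonempty then (S.filter (· < v)).max' h else 0

lemma kap_facts (S : Finset ℕ) (v : ℕ) :
    kap S v = 0 ∨ (kap S v ∈ S ∧ kap S v < v ∧ ∀ y ∈ S, y < v → y ≤ kap S v) := by
  unfold kap
  split_ifs with h
  · right
    have hm := (S.filter (· < v)).max'_mem h
    rw [Finset.mem_filter] at hm
    exact ⟨hm.1, hm.2, fun y hy hyv =>
      Finset.le_max' (S.filter (· < v)) y (Finset.mem_filter.2 ⟨hy, hyv⟩)⟩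
  · left; rfl

lemma kap_empty (S : Finset ℕ) (v : ℕ) (h : ∀ y ∈ S, ¬ y < v) : kap S v = 0 := by
  unfold kap
  rw [dif_neg]
  rw [Finset.filter_nonempty_iff]
  push_neg
  intro y hy
  exact Nat.le_of_not_lt (h y hy)

lemma kap_eq (S : Finset ℕ) (v x : ℕ) (hx : x ∈ S) (hxv : x < v)
    (hmax : ∀ y ∈ S, y < v → y ≤ x) : kap S v = x := by
  unfold kap
  have hne : (S.filter (· < v)).Nonempty := ⟨x, Finset.mem_filter.2 ⟨hx, hxv⟩⟩
  rw [dif_pos hne]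
  apply le_antisymm
  · apply Finset.max'_le
    intro y hy
    rw [Finset.mem_filter] at hy
    exact hmax y hy.1 hy.2
  · exact Finset.le_max' (S.filter (· < v)) x (Finset.mem_filter.2 ⟨hx, hxv⟩)

set_option maxHeartbeats 1000000 in
/-- the dagger inequality. -/
lemma dagger (d Q b : ℕ) (hd : 1 ≤ d) (hb : 1 ≤ b) (hbQ : b < Q) (S : Finset ℕ)
    (hS : S ⊆ Finset.Icc (d+1) (d*(Q+1))) :
    Q * (((Finset.Icc (d+1) (d*(Q+1))) \ S).filter (specP d Q b)).card
      ≤ Q * (∑ v ∈ (Finset.Icc (d+1) (d*(Q+1))) \ S, (Finset.Icc (v-d) (v-1) ∩ S).card)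
        + b * ((Finset.Icc (d+1) (d*(Q+1))) \ S).card := by
  set n := d * (Q+1) with hn
  set Cd := (Finset.Icc (d+1) n) \ S with hCd
  set K := insert 0 S with hK
  have hmaps : ∀ v ∈ Cd, kap S v ∈ K := by
    intro v _
    rcases kap_facts S v with h | h
    · rw [h]; exact Finset.mem_insert_self _ _
    · exact Finset.mem_insert_of_mem h.1
  have hCdU : ∀ v ∈ Cd, d + 1 ≤ v ∧ v ≤ n ∧ v ∉ S := by
    intro v hv
    rw [hCd, Finset.mem_sdiff, Finset.mem_Icc] at hv
    exact ⟨hv.1.1, hv.1.2, hv.2⟩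
  -- fiberwise expansion
  have h1 : (Cd.filter (specP d Q b)).card
      = ∑ x ∈ K, ((Cd.filter (fun v => kap S v = x)).filter (specP d Q b)).card := by
    rw [Finset.card_eq_sum_card_fiberwise
      (f := kap S) (t := K) (fun v hv => hmaps v (Finset.filter_subset _ _ hv))]
    exact Finset.sum_congr rfl (fun x _ => by rw [Finset.filter_comm])
  have h2 : ∑ v ∈ Cd, (Finset.Icc (v-d) (v-1) ∩ S).card
      = ∑ x ∈ K, ∑ v ∈ Cd.filter (fun v => kap S v = x), (Finset.Icc (v-d) (v-1) ∩ S).card :=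
    (Finset.sum_fiberwise_of_maps_to hmaps _).symm
  have h3 : Cd.card = ∑ x ∈ K, (Cd.filter (fun v => kap S v = x)).card :=
    Finset.card_eq_sum_card_fiberwise hmaps
  rw [h1, h2, h3, Finset.mul_sum, Finset.mul_sum, Finset.mul_sum, ← Finset.sum_add_distrib]
  apply Finset.sum_le_sum
  intro x hx
  set F := Cd.filter (fun v => kap S v = x) with hF
  rcases Finset.eq_empty_or_nonempty F with hFe | hFne
  · simp [hFe]
  set w := F.max' hFne with hw
  have hwF : w ∈ F := F.max'_mem hFne
  have hwmax : ∀ v ∈ F, v ≤ w := fun v hv => F.le_max' v hv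
  have hwCd := hCdU w (Finset.mem_filter.1 hwF).1
  have hkw : kap S w = x := (Finset.mem_filter.1 hwF).2
  rcases Finset.mem_insert.1 hx with rfl | hxS
  · -- grounded case
    have hem : ∀ y ∈ S, ¬ y < w := by
      intro y hy hyw
      have hne : (S.filter (· < w)).Nonempty := ⟨y, Finset.mem_filter.2 ⟨hy, hyw⟩⟩
      have hmem : kap S w ∈ S := by
        unfold kap
        rw [dif_pos hne]
        exact (Finset.mem_filter.1 ((S.filter (· < w)).max'_mem hne)).1
      rw [hkw] at hmem
      have := hS hmem
      rw [Finset.mem_Icc] at this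
      omega
    have hFeq : F = Finset.Icc (d+1) w := by
      ext u
      constructor
      · intro hu
        have := hCdU u (Finset.mem_filter.1 hu).1
        rw [Finset.mem_Icc]
        exact ⟨this.1, hwmax u hu⟩
      · intro hu
        rw [Finset.mem_Icc] at hu
        have huS : u ∉ S := by
          intro huS
          have : u < w ∨ u = w := by omega
          rcases this with h | h
          · exact hem u huS h
          · rw [h] at huS; exact hwCd.2.2 huS
        rw [hF, Finset.mem_filter]
        refine ⟨?_, ?_⟩
        · rw [hCd, Finset.mem_sdiff, Finset.mem_Icc]
          exact ⟨⟨hu.1, le_trans hu.2 hwCd.2.1⟩, huS⟩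
        · apply kap_empty
          intro y hy hyu
          exact hem y hy (by omega)
    rw [hFeq]
    calc Q * ((Finset.Icc (d+1) w).filter (specP d Q b)).card
        ≤ b * (Finset.Icc (d+1) w).card := gap_grounded d Q b w hd hb hbQ
      _ ≤ Q * (∑ v ∈ Finset.Icc (d+1) w, (Finset.Icc (v-d) (v-1) ∩ S).card)
          + b * (Finset.Icc (d+1) w).card := Nat.le_add_left _ _
  · -- ungrounded case
    have hxIcc := Finset.mem_Icc.1 (hS hxS)
    have hkapw : x < w ∧ ∀ y ∈ S, y < w → y ≤ x := by
      rcases kap_facts S w with h | h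
      · rw [hkw] at h; omega
      · rw [hkw] at h; exact ⟨h.2.1, h.2.2⟩
    have hFeq : F = Finset.Ioc x w := by
      ext u
      constructor
      · intro hu
        have hu1 := hCdU u (Finset.mem_filter.1 hu).1
        have hku : kap S u = x := (Finset.mem_filter.1 hu).2
        rcases kap_facts S u with h | h
        · rw [hku] at h; omega
        · rw [hku] at h
          exact Finset.mem_Ioc.2 ⟨h.2.1, hwmax u hu⟩
      · intro hu
        rw [Finset.mem_Ioc] at hu
        have huS : u ∉ S := by
          intro huS
          have : u < w ∨ u = w := by omega
          rcases this with h | h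
          · have := hkapw.2 u huS h; omega
          · rw [h] at huS; exact hwCd.2.2 huS
        rw [hF, Finset.mem_filter]
        refine ⟨?_, ?_⟩
        · rw [hCd, Finset.mem_sdiff, Finset.mem_Icc]
          exact ⟨⟨by omega, le_trans hu.2 hwCd.2.1⟩, huS⟩
        · apply kap_eq S u x hxS hu.1
          intro y hy hyu
          by_contra hc
          have := hkapw.2 y hy (by omega)
          omega
    have hpair : min d (w - x) ≤ ∑ v ∈ F, (Finset.Icc (v-d) (v-1) ∩ S).card := by
      have hsub : Finset.Ioc x (min (x+d) w) ⊆ F := by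
        rw [hFeq]
        apply Finset.Ioc_subset_Ioc le_rfl
        omega
      have hone : ∀ v ∈ Finset.Ioc x (min (x+d) w),
          1 ≤ (Finset.Icc (v-d) (v-1) ∩ S).card := by
        intro v hv
        rw [Finset.mem_Ioc] at hv
        apply Finset.card_pos.2
        exact ⟨x, Finset.mem_inter.2 ⟨Finset.mem_Icc.2 ⟨by omega, by omega⟩, hxS⟩⟩
      calc min d (w - x) = (Finset.Ioc x (min (x+d) w)).card := by
            rw [Nat.card_Ioc]; omega
        _ = ∑ v ∈ Finset.Ioc x (min (x+d) w), 1 := by simp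
        _ ≤ ∑ v ∈ Finset.Ioc x (min (x+d) w), (Finset.Icc (v-d) (v-1) ∩ S).card :=
            Finset.sum_le_sum hone
        _ ≤ ∑ v ∈ F, (Finset.Icc (v-d) (v-1) ∩ S).card :=
            Finset.sum_le_sum_of_subset hsub
    calc Q * (F.filter (specP d Q b)).card
        ≤ Q * min d (w - x) + b * F.card := by
          rw [hFeq]
          exact gap_free d Q b x w hd hb hbQ (by omega)
      _ ≤ Q * (∑ v ∈ F, (Finset.Icc (v-d) (v-1) ∩ S).card) + b * F.card := by
          have := Nat.mul_le_mul_left Q hpair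
          omega

/-! ### structure of `Tr` -/

lemma target_bounds (d Q r k : ℕ) (hQ : 1 ≤ Q) : 1 ≤ target Q r k ∧ target Q r k ≤ Q := by
  unfold target
  split_ifs with h
  · have hb : 1 ≤ r % Q := by omega
    constructor
    · exact Ispec_pos Q (r % Q) (k+1) hb hQ (by omega)
    · exact Ispec_le_Q Q (r % Q) (k+1) hb (by omega)
  · have := Nat.mod_lt (k - r % Q) (show 0 < Q by omega)
    omega

lemma target_eq_Ispec (Q r k : ℕ) (h : k < r % Q) :
    target Q r k = Ispec Q (r % Q) (k + 1) := by
  unfold target Ispec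
  rw [if_pos h]

lemma mem_T0_iff (d Q : ℕ) (σ : Finset ℕ) :
    σ ∈ T0 d Q ↔ σ ⊆ Finset.Icc 1 (d*(Q+1)) ∧ σ.Nonempty ∧ ∀ a ∈ σ, ∀ b ∈ σ, a ≤ b + d := by
  simp only [T0, Finset.mem_filter, Finset.mem_powerset, and_assoc]

lemma verts_Tr (d Q r : ℕ) (hQ : 1 ≤ Q) :
    verts (Tr d Q r) = Finset.Icc 1 (d*(Q+1)) ∪ rootSet d Q r := by
  apply Finset.Subset.antisymm
  · show (Tr d Q r).sup id ≤ (Finset.Icc 1 (d*(Q+1)) ∪ rootSet d Q r)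
    rw [Finset.sup_le_iff]
    intro σ hσ
    rcases Finset.mem_union.1 hσ with h | h
    · rw [mem_T0_iff] at h
      exact le_trans h.1 (Finset.subset_union_left)
    · obtain ⟨k, hk, hσ'⟩ := Finset.mem_biUnion.1 h
      obtain ⟨τ, hτ, rfl⟩ := Finset.mem_image.1 hσ'
      rw [Finset.mem_powerset] at hτ
      intro v hv
      rcases Finset.mem_insert.1 hv with rfl | hv'
      · apply Finset.mem_union_right
        exact Finset.mem_image.2 ⟨k, hk, rfl⟩
      · apply Finset.mem_union_left
        exact sigmaB_subset d Q _ (target_bounds d Q r k hQ).2 (hτ hv')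
  · intro v hv
    rw [Finset.mem_union] at hv
    unfold verts
    rw [Finset.mem_sup]
    rcases hv with h | h
    · refine ⟨{v}, Finset.mem_union_left _ ?_, by simp⟩
      rw [mem_T0_iff]
      refine ⟨by simpa using h, Finset.singleton_nonempty v, ?_⟩
      intro a ha bb hbb
      simp only [Finset.mem_singleton] at ha hbb
      omega
    · obtain ⟨k, hk, rfl⟩ := Finset.mem_image.1 h
      refine ⟨{rootVtx d Q k}, Finset.mem_union_right _ ?_, by simp⟩
      apply Finset.mem_biUnion.2
      exact ⟨k, hk, Finset.mem_image.2 ⟨∅, by simp, by simp⟩⟩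

lemma unrooted_eq (d Q r : ℕ) (hd : 1 ≤ d) (hQ : 1 ≤ Q) :
    unrooted d Q r = Finset.Icc (d+1) (d*(Q+1)) := by
  unfold unrooted
  rw [verts_Tr d Q r hQ]
  ext v
  simp only [Finset.mem_sdiff, Finset.mem_union, Finset.mem_Icc, sigmaB, rootSet,
    Finset.mem_image, Finset.mem_range, rootVtx]
  constructor
  · rintro ⟨h1, h2⟩
    push_neg at h2
    rcases h1 with h | ⟨k, hk, rfl⟩
    · have := h2.1
      simp only [Nat.zero_mul, Nat.zero_add, Nat.one_mul] at this
      omega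
    · exfalso
      exact h2.2 k hk rfl
  · intro h
    refine ⟨Or.inl ⟨by omega, h.2⟩, ?_⟩
    push_neg
    constructor
    · simp only [Nat.zero_mul, Nat.zero_add, Nat.one_mul]
      omega
    · intro k hk heq
      omega

/-! ### sums over roots -/

lemma sum_mod_cycle (Q a : ℕ) (hQ : 1 ≤ Q) (G : ℕ → ℕ) :
    ∑ m ∈ Finset.range (Q * a), G (m % Q) = a * ∑ m ∈ Finset.range Q, G m := by
  induction a with
  | zero => simp
  | succ a ih =>
    have h1 : Q * (a + 1) = Q * a + Q := by ring
    rw [h1, Finset.range_eq_Ico,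
      ← Finset.sum_Ico_consecutive _ (Nat.zero_le (Q * a)) (by omega : Q * a ≤ Q * a + Q)]
    rw [← Finset.range_eq_Ico] at *
    rw [ih, Finset.sum_Ico_eq_sum_range]
    have h2 : ∀ i ∈ Finset.range (Q * a + Q - Q * a), G ((Q * a + i) % Q) = G (i % Q) := by
      intro i _
      congr 1
      rw [Nat.add_comm, Nat.add_mul_mod_self_left]
    rw [Finset.sum_congr rfl h2]
    have h3 : Q * a + Q - Q * a = Q := by omega
    rw [h3]
    have h4 : ∀ i ∈ Finset.range Q, G (i % Q) = G i := by
      intro i hi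
      rw [Finset.mem_range] at hi
      rw [Nat.mod_eq_of_lt hi]
    rw [Finset.sum_congr rfl h4]
    ring

lemma sum_range_shift (b : ℕ) (G : ℕ → ℕ) :
    ∑ j ∈ Finset.Icc 1 b, G j = ∑ k ∈ Finset.range b, G (k + 1) := by
  have h1 : Finset.Icc 1 b = Finset.Ico 1 (b + 1) := by
    ext; simp [Finset.mem_Icc, Finset.mem_Ico]
  rw [h1, Finset.sum_Ico_eq_sum_range]
  simp only [Nat.add_sub_cancel]
  exact Finset.sum_congr rfl (fun k _ => by rw [Nat.add_comm])

lemma root_sum_split (Q r : ℕ) (hQ : 1 ≤ Q) (G : ℕ → ℕ) :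
    ∑ k ∈ Finset.range r, G (target Q r k)
      = (∑ j ∈ Finset.Icc 1 (r % Q), G (Ispec Q (r % Q) j))
        + (r / Q) * ∑ i ∈ Finset.Icc 1 Q, G i := by
  have hbr : r % Q ≤ r := Nat.mod_le r Q
  rw [Finset.range_eq_Ico, ← Finset.sum_Ico_consecutive _ (Nat.zero_le (r % Q)) hbr]
  congr 1
  · rw [sum_range_shift (r % Q) (fun j => G (Ispec Q (r % Q) j))]
    rw [Finset.sum_Ico_eq_sum_range]
    simp only [Nat.sub_zero, Nat.zero_add]
    apply Finset.sum_congr rfl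
    intro k hk
    rw [Finset.mem_range] at hk
    rw [target_eq_Ispec Q r k hk]
  · rw [Finset.sum_Ico_eq_sum_range]
    have hdm := Nat.div_add_mod r Q
    have h1 : r - r % Q = Q * (r / Q) := by omega
    rw [h1]
    have h2 : ∀ i ∈ Finset.range (Q * (r / Q)), G (target Q r (r % Q + i)) = G (i % Q + 1) := by
      intro i _
      congr 1
      unfold target
      rw [if_neg (by omega)]
      congr 2
      omega
    rw [Finset.sum_congr rfl h2, sum_mod_cycle Q (r / Q) hQ (fun i => G (i + 1))]
    rw [sum_range_shift Q G]

/-! ### the two counting bounds -/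

lemma max_insert_eq (v : ℕ) (τ : Finset ℕ) (hτ : ∀ a ∈ τ, a < v) :
    ∀ a ∈ insert v τ, a ≤ v := by
  intro a ha
  rcases Finset.mem_insert.1 ha with rfl | h
  · exact le_rfl
  · exact (hτ a h).le

lemma eCount_upper (d Q r : ℕ) (hd : 1 ≤ d) (hQ : 1 ≤ Q) (S : Finset ℕ)
    (hS : S ⊆ Finset.Icc (d+1) (d*(Q+1))) :
    eCount (Tr d Q r) S ≤ d * Q * 2^d + r * (2^d - 1) := by
  set n := d * (Q+1) with hn
  set bigA := (Finset.Icc (d+1) n).biUnion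
    (fun v => ((Finset.Icc (v-d) (v-1)).powerset).image (insert v)) with hbigA
  set bigB := (Finset.range r).biUnion
    (fun k => ((sigmaB d (target Q r k)).powerset.filter (fun τ => τ.Nonempty)).image
      (insert (rootVtx d Q k))) with hbigB
  have hsub : (Tr d Q r).filter (fun σ => σ.Nonempty ∧ (σ ∩ S).Nonempty) ⊆ bigA ∪ bigB := by
    intro σ hσ
    have hσ'' := Finset.mem_filter.1 hσ
    have hσTr := hσ''.1
    have hσne := hσ''.2.1
    have hσS := hσ''.2.2
    obtain ⟨u, hu⟩ := hσS
    rw [Finset.mem_inter] at hu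
    have huS := Finset.mem_Icc.1 (hS hu.2)
    rcases Finset.mem_union.1 hσTr with h | h
    · rw [mem_T0_iff] at h
      apply Finset.mem_union_left
      set v := σ.max' hσne with hv
      have hvσ : v ∈ σ := σ.max'_mem hσne
      have hvmax : ∀ a ∈ σ, a ≤ v := fun a ha => σ.le_max' a ha
      have hvIcc := Finset.mem_Icc.1 (h.1 hvσ)
      have hvd : d + 1 ≤ v := le_trans huS.1 (hvmax u hu.1)
      apply Finset.mem_biUnion.2
      refine ⟨v, Finset.mem_Icc.2 ⟨hvd, hvIcc.2⟩, ?_⟩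
      apply Finset.mem_image.2
      refine ⟨σ.erase v, ?_, Finset.insert_erase hvσ⟩
      rw [Finset.mem_powerset]
      intro a ha
      have ha' := Finset.mem_of_mem_erase ha
      have hane := Finset.ne_of_mem_erase ha
      have h2 := h.2.2 v hvσ a ha'
      rw [Finset.mem_Icc]
      have := hvmax a ha'
      omega
    · apply Finset.mem_union_right
      obtain ⟨k, hk, hσ'⟩ := Finset.mem_biUnion.1 h
      obtain ⟨τ, hτ, rfl⟩ := Finset.mem_image.1 hσ'
      rw [Finset.mem_powerset] at hτ
      apply Finset.mem_biUnion.2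
      refine ⟨k, hk, ?_⟩
      apply Finset.mem_image.2
      refine ⟨τ, ?_, rfl⟩
      rw [Finset.mem_filter, Finset.mem_powerset]
      refine ⟨hτ, ?_⟩
      -- u ∈ insert root τ, u ≤ n < root, so u ∈ τ
      rcases Finset.mem_insert.1 hu.1 with heq | hin
      · exfalso
        unfold rootVtx at heq
        omega
      · exact ⟨u, hin⟩
  calc eCount (Tr d Q r) S ≤ (bigA ∪ bigB).card := Finset.card_le_card hsub
    _ ≤ bigA.card + bigB.card := Finset.card_union_le _ _
    _ ≤ d * Q * 2^d + r * (2^d - 1) := by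
        gcongr
        · calc bigA.card ≤ ∑ v ∈ Finset.Icc (d+1) n,
              (((Finset.Icc (v-d) (v-1)).powerset).image (insert v)).card :=
                Finset.card_biUnion_le
            _ ≤ ∑ v ∈ Finset.Icc (d+1) n, 2^d := by
                apply Finset.sum_le_sum
                intro v hv
                rw [Finset.mem_Icc] at hv
                calc (((Finset.Icc (v-d) (v-1)).powerset).image (insert v)).card
                    ≤ ((Finset.Icc (v-d) (v-1)).powerset).card := Finset.card_image_le
                  _ = 2 ^ (Finset.Icc (v-d) (v-1)).card := Finset.card_powerset _
                  _ ≤ 2 ^ d := by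
                      apply Nat.pow_le_pow_right (by norm_num)
                      rw [Nat.card_Icc]
                      omega
            _ = d * Q * 2^d := by
                rw [Finset.sum_const, Nat.card_Icc]
                have : n + 1 - (d + 1) = d * Q := by
                  have : d * (Q + 1) = d * Q + d := by ring
                  omega
                rw [this, smul_eq_mul]
        · calc bigB.card ≤ ∑ k ∈ Finset.range r,
              (((sigmaB d (target Q r k)).powerset.filter (fun τ => τ.Nonempty)).image
                (insert (rootVtx d Q k))).card := Finset.card_biUnion_le
            _ ≤ ∑ k ∈ Finset.range r, (2^d - 1) := by
                apply Finset.sum_le_sum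
                intro k _
                have hone : ((sigmaB d (target Q r k)).powerset.filter
                    (fun τ => ¬ τ.Nonempty)).card = 1 := by
                  have : (sigmaB d (target Q r k)).powerset.filter (fun τ => ¬ τ.Nonempty)
                      = {∅} := by
                    ext τ
                    simp only [Finset.mem_filter, Finset.mem_powerset, Finset.mem_singleton,
                      Finset.not_nonempty_iff_eq_empty]
                    constructor
                    · exact fun h => h.2
                    · rintro rfl
                      exact ⟨Finset.empty_subset _, rfl⟩
                  rw [this, Finset.card_singleton]
                have htot := Finset.card_filter_add_card_filter_not
                  (s := (sigmaB d (target Q r k)).powerset) (p := fun τ => τ.Nonempty)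
                rw [hone, Finset.card_powerset, card_sigmaB] at htot
                calc (((sigmaB d (target Q r k)).powerset.filter (fun τ => τ.Nonempty)).image
                    (insert (rootVtx d Q k))).card
                    ≤ ((sigmaB d (target Q r k)).powerset.filter (fun τ => τ.Nonempty)).card :=
                      Finset.card_image_le
                  _ = 2^d - 1 := by omega
            _ = r * (2^d - 1) := by rw [Finset.sum_const, Finset.card_range, smul_eq_mul]

set_option maxHeartbeats 1000000 in
lemma eCount_lower (d Q r : ℕ) (hd : 1 ≤ d) (hQ : 1 ≤ Q) (S : Finset ℕ)
    (hS : S ⊆ Finset.Icc (d+1) (d*(Q+1))) :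
    2^d * S.card
      + (∑ v ∈ (Finset.Icc (d+1) (d*(Q+1))) \ S,
          (2^d - 2^(d - (Finset.Icc (v-d) (v-1) ∩ S).card)))
      + (∑ k ∈ Finset.range r, (2^d - 2^(d - (sigmaB d (target Q r k) ∩ S).card)))
      ≤ eCount (Tr d Q r) S := by
  set n := d * (Q+1) with hn
  set fA : ℕ → Finset (Finset ℕ) := fun v =>
    ((Finset.Icc (v-d) (v-1)).powerset.filter (fun τ => v ∈ S ∨ (τ ∩ S).Nonempty)).image
      (insert v) with hfA
  set fB : ℕ → Finset (Finset ℕ) := fun k =>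
    ((sigmaB d (target Q r k)).powerset.filter (fun τ => (τ ∩ S).Nonempty)).image
      (insert (rootVtx d Q k)) with hfB
  set partA := (Finset.Icc (d+1) n).biUnion fA with hpartA
  set partB := (Finset.range r).biUnion fB with hpartB
  -- elementary membership facts
  have hfA_struct : ∀ v ∈ Finset.Icc (d+1) n, ∀ σ ∈ fA v, v ∈ σ ∧ (∀ a ∈ σ, a ≤ v) ∧
      σ = insert v (σ.erase v) ∧ σ.erase v ⊆ Finset.Icc (v-d) (v-1) ∧
      (v ∈ S ∨ ((σ.erase v) ∩ S).Nonempty) := by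
    intro v hvIcc σ hσ
    rw [Finset.mem_Icc] at hvIcc
    obtain ⟨τ, hτ, rfl⟩ := Finset.mem_image.1 hσ
    rw [Finset.mem_filter, Finset.mem_powerset] at hτ
    have hτv : v ∉ τ := by
      intro hvτ
      have := hτ.1 hvτ
      rw [Finset.mem_Icc] at this
      omega
    have herase : (insert v τ).erase v = τ := Finset.erase_insert hτv
    refine ⟨Finset.mem_insert_self _ _, ?_, by rw [herase], by rw [herase]; exact hτ.1, ?_⟩
    · intro a ha
      rcases Finset.mem_insert.1 ha with rfl | h
      · exact le_rfl
      · have := hτ.1 h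
        rw [Finset.mem_Icc] at this
        omega
    · rw [herase]
      exact hτ.2
  have hfB_struct : ∀ k σ, σ ∈ fB k → rootVtx d Q k ∈ σ ∧
      (∀ a ∈ σ, a ≤ rootVtx d Q k) ∧ ((σ.erase (rootVtx d Q k)) ∩ S).Nonempty ∧
      σ.erase (rootVtx d Q k) ⊆ sigmaB d (target Q r k) := by
    intro k σ hσ
    obtain ⟨τ, hτ, rfl⟩ := Finset.mem_image.1 hσ
    rw [Finset.mem_filter, Finset.mem_powerset] at hτ
    have hsub := sigmaB_subset d Q _ (target_bounds d Q r k hQ).2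
    have hτv : rootVtx d Q k ∉ τ := by
      intro hvτ
      have := hsub (hτ.1 hvτ)
      rw [Finset.mem_Icc] at this
      unfold rootVtx at this
      omega
    have herase : (insert (rootVtx d Q k) τ).erase (rootVtx d Q k) = τ :=
      Finset.erase_insert hτv
    refine ⟨Finset.mem_insert_self _ _, ?_, by rw [herase]; exact hτ.2,
      by rw [herase]; exact hτ.1⟩
    intro a ha
    rcases Finset.mem_insert.1 ha with rfl | h
    · exact le_rfl
    · have := hsub (hτ.1 h)
      rw [Finset.mem_Icc] at this
      unfold rootVtx
      omega
  -- partA ∪ partB lies in the counted family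
  have hsub : partA ∪ partB ⊆ (Tr d Q r).filter (fun σ => σ.Nonempty ∧ (σ ∩ S).Nonempty) := by
    intro σ hσ
    rw [Finset.mem_filter]
    rcases Finset.mem_union.1 hσ with h | h
    · obtain ⟨v, hv, hσv⟩ := Finset.mem_biUnion.1 h
      rw [Finset.mem_Icc] at hv
      obtain ⟨hvσ, hmax, heq, hsub', hor⟩ := hfA_struct v (Finset.mem_Icc.2 hv) σ hσv
      refine ⟨?_, ⟨v, hvσ⟩, ?_⟩
      · apply Finset.mem_union_left
        rw [mem_T0_iff]
        refine ⟨?_, ⟨v, hvσ⟩, ?_⟩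
        · intro a ha
          rw [Finset.mem_Icc]
          by_cases hav : a = v
          · subst hav; omega
          · have := hsub' (Finset.mem_erase.2 ⟨hav, ha⟩)
            rw [Finset.mem_Icc] at this
            omega
        · intro a ha bb hbb
          have h1 := hmax a ha
          by_cases hbv : bb = v
          · subst hbv; omega
          · have := hsub' (Finset.mem_erase.2 ⟨hbv, hbb⟩)
            rw [Finset.mem_Icc] at this
            omega
      · rcases hor with hvS | ⟨u, hu⟩
        · exact ⟨v, Finset.mem_inter.2 ⟨hvσ, hvS⟩⟩
        · rw [Finset.mem_inter] at hu
          exact ⟨u, Finset.mem_inter.2 ⟨Finset.mem_of_mem_erase hu.1, hu.2⟩⟩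
    · obtain ⟨k, hk, hσk⟩ := Finset.mem_biUnion.1 h
      obtain ⟨hvσ, hmax, hne, hsub'⟩ := hfB_struct k σ hσk
      obtain ⟨u, hu⟩ := hne
      rw [Finset.mem_inter] at hu
      refine ⟨?_, ⟨_, hvσ⟩, ⟨u, Finset.mem_inter.2 ⟨Finset.mem_of_mem_erase hu.1, hu.2⟩⟩⟩
      apply Finset.mem_union_right
      apply Finset.mem_biUnion.2
      refine ⟨k, hk, ?_⟩
      obtain ⟨τ, hτ, rfl⟩ := Finset.mem_image.1 hσk
      apply Finset.mem_image.2
      refine ⟨τ, ?_, rfl⟩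
      rw [Finset.mem_filter, Finset.mem_powerset] at hτ
      rw [Finset.mem_powerset]
      exact hτ.1
  -- disjointness
  have hAn : ∀ σ ∈ partA, ∀ a ∈ σ, a ≤ n := by
    intro σ hσ a ha
    obtain ⟨v, hv, hσv⟩ := Finset.mem_biUnion.1 hσ
    obtain ⟨_, hmax, _, _, _⟩ := hfA_struct v hv σ hσv
    rw [Finset.mem_Icc] at hv
    exact le_trans (hmax a ha) hv.2
  have hdisjAB : Disjoint partA partB := by
    rw [Finset.disjoint_left]
    intro σ hσA hσB
    obtain ⟨k, hk, hσk⟩ := Finset.mem_biUnion.1 hσB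
    obtain ⟨hvσ, _, _, _⟩ := hfB_struct k σ hσk
    have := hAn σ hσA _ hvσ
    unfold rootVtx at this
    omega
  have hcardA : partA.card = ∑ v ∈ Finset.Icc (d+1) n, (fA v).card := by
    rw [hpartA]
    apply Finset.card_biUnion
    intro v₁ h₁ v₂ h₂ hne
    rw [Function.onFun, Finset.disjoint_left]
    intro σ hσ₁ hσ₂
    obtain ⟨ha₁, hb₁, _, _, _⟩ := hfA_struct v₁ h₁ σ hσ₁
    obtain ⟨ha₂, hb₂, _, _, _⟩ := hfA_struct v₂ h₂ σ hσ₂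
    exact hne (le_antisymm (hb₂ v₁ ha₁) (hb₁ v₂ ha₂))
  have hcardB : partB.card = ∑ k ∈ Finset.range r, (fB k).card := by
    rw [hpartB]
    apply Finset.card_biUnion
    intro k₁ h₁ k₂ h₂ hne
    rw [Function.onFun, Finset.disjoint_left]
    intro σ hσ₁ hσ₂
    obtain ⟨ha₁, hb₁, _, _⟩ := hfB_struct k₁ σ hσ₁
    obtain ⟨ha₂, hb₂, _, _⟩ := hfB_struct k₂ σ hσ₂
    have h3 := hb₂ _ ha₁
    have h4 := hb₁ _ ha₂
    unfold rootVtx at h3 h4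
    omega
  -- the cardinality of each piece
  have hfA_card_S : ∀ v ∈ S, (fA v).card = 2^d := by
    intro v hv
    have hvIcc := Finset.mem_Icc.1 (hS hv)
    rw [hfA]
    have hinj : (((Finset.Icc (v-d) (v-1)).powerset.filter
        (fun τ => v ∈ S ∨ (τ ∩ S).Nonempty)).image (insert v)).card
        = ((Finset.Icc (v-d) (v-1)).powerset.filter
        (fun τ => v ∈ S ∨ (τ ∩ S).Nonempty)).card := by
      apply card_image_insert
      intro τ hτ
      rw [Finset.mem_filter, Finset.mem_powerset] at hτ
      intro hvτ
      have := hτ.1 hvτ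
      rw [Finset.mem_Icc] at this
      omega
    rw [hinj, Finset.filter_true_of_mem (fun τ _ => Or.inl hv), Finset.card_powerset,
      Nat.card_Icc]
    congr 1
    omega
  have hfA_card_C : ∀ v ∈ Finset.Icc (d+1) n, v ∉ S →
      (fA v).card = 2^d - 2^(d - (Finset.Icc (v-d) (v-1) ∩ S).card) := by
    intro v hv hvS
    rw [Finset.mem_Icc] at hv
    rw [hfA]
    have hinj : (((Finset.Icc (v-d) (v-1)).powerset.filter
        (fun τ => v ∈ S ∨ (τ ∩ S).Nonempty)).image (insert v)).card
        = ((Finset.Icc (v-d) (v-1)).powerset.filter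
        (fun τ => v ∈ S ∨ (τ ∩ S).Nonempty)).card := by
      apply card_image_insert
      intro τ hτ
      rw [Finset.mem_filter, Finset.mem_powerset] at hτ
      intro hvτ
      have := hτ.1 hvτ
      rw [Finset.mem_Icc] at this
      omega
    rw [hinj]
    have hcongr : (Finset.Icc (v-d) (v-1)).powerset.filter
        (fun τ => v ∈ S ∨ (τ ∩ S).Nonempty)
        = (Finset.Icc (v-d) (v-1)).powerset.filter (fun τ => (τ ∩ S).Nonempty) := by
      apply Finset.filter_congr
      intro τ _
      constructor
      · intro h'
        rcases h' with h' | h'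
        · exact absurd h' hvS
        · exact h'
      · exact Or.inr
    rw [hcongr, card_powerset_filter_inter]
    have hcard : (Finset.Icc (v-d) (v-1)).card = d := by
      rw [Nat.card_Icc]; omega
    rw [hcard]
  have hfB_card : ∀ k, (fB k).card = 2^d - 2^(d - (sigmaB d (target Q r k) ∩ S).card) := by
    intro k
    rw [hfB]
    have hsubk := sigmaB_subset d Q _ (target_bounds d Q r k hQ).2
    have hinj : (((sigmaB d (target Q r k)).powerset.filter
        (fun τ => (τ ∩ S).Nonempty)).image (insert (rootVtx d Q k))).card
        = ((sigmaB d (target Q r k)).powerset.filter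
        (fun τ => (τ ∩ S).Nonempty)).card := by
      apply card_image_insert
      intro τ hτ
      rw [Finset.mem_filter, Finset.mem_powerset] at hτ
      intro hvτ
      have := hsubk (hτ.1 hvτ)
      rw [Finset.mem_Icc] at this
      unfold rootVtx at this
      omega
    rw [hinj, card_powerset_filter_inter, card_sigmaB]
  -- assemble
  have hsplit : ∑ v ∈ Finset.Icc (d+1) n, (fA v).card
      = (∑ v ∈ (Finset.Icc (d+1) n) \ S,
          (2^d - 2^(d - (Finset.Icc (v-d) (v-1) ∩ S).card))) + 2^d * S.card := by
    rw [← Finset.sum_sdiff hS]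
    congr 1
    · apply Finset.sum_congr rfl
      intro v hv
      rw [Finset.mem_sdiff] at hv
      exact hfA_card_C v hv.1 hv.2
    · rw [Finset.sum_congr rfl (fun v hv => hfA_card_S v hv), Finset.sum_const, smul_eq_mul,
        Nat.mul_comm]
  calc 2^d * S.card
      + (∑ v ∈ (Finset.Icc (d+1) n) \ S, (2^d - 2^(d - (Finset.Icc (v-d) (v-1) ∩ S).card)))
      + (∑ k ∈ Finset.range r, (2^d - 2^(d - (sigmaB d (target Q r k) ∩ S).card)))
      = partA.card + partB.card := by
        rw [hcardA, hcardB, hsplit]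
        rw [Finset.sum_congr rfl (fun k _ => hfB_card k)]
        ring
    _ = (partA ∪ partB).card := (Finset.card_union_of_disjoint hdisjAB).symm
    _ ≤ ((Tr d Q r).filter (fun σ => σ.Nonempty ∧ (σ ∩ S).Nonempty)).card :=
        Finset.card_le_card hsub
    _ = eCount (Tr d Q r) S := rfl

lemma sigmaB_subset_U (d Q i : ℕ) (hd : 1 ≤ d) (hi1 : 1 ≤ i) (hiQ : i ≤ Q) :
    sigmaB d i ⊆ Finset.Icc (d+1) (d*(Q+1)) := by
  intro v hv
  rw [sigmaB, Finset.mem_Icc] at hv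
  rw [Finset.mem_Icc]
  have e1 : 1 * d ≤ i * d := Nat.mul_le_mul_right d hi1
  have e2 : (i+1) * d ≤ (Q+1) * d := Nat.mul_le_mul_right d (by omega)
  have e3 : (Q+1) * d = d * (Q+1) := Nat.mul_comm _ _
  omega

set_option maxHeartbeats 1000000 in
/-- the key inequality : `|S| · e(U) ≤ |U| · e(S)` (in product form). -/
lemma key_ineq (d Q r : ℕ) (hd : 1 ≤ d) (hQ : 1 ≤ Q) (S : Finset ℕ)
    (hS : S ⊆ Finset.Icc (d+1) (d*(Q+1))) :
    S.card * (d * Q * 2^d + r * (2^d - 1)) ≤ (d * Q) * eCount (Tr d Q r) S := by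
  set n := d * (Q+1) with hn
  set b := r % Q with hb
  set a := r / Q with ha
  set M := 2^d - 1 with hM
  set Cd := (Finset.Icc (d+1) n) \ S with hCd
  set tv : ℕ → ℕ := fun v => (Finset.Icc (v-d) (v-1) ∩ S).card with htv
  set G : ℕ → ℕ := fun i => 2^d - 2^(d - (sigmaB d i ∩ S).card) with hG
  set SQ := S.card with hSQ
  set E := eCount (Tr d Q r) S with hE
  set X1 := ∑ v ∈ Cd, (2^d - 2^(d - tv v)) with hX1d
  set T := ∑ v ∈ Cd, tv v with hT
  set SB := ∑ j ∈ Finset.Icc 1 b, (sigmaB d (Ispec Q b j) ∩ S).card with hSB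
  set GB := ∑ j ∈ Finset.Icc 1 b, G (Ispec Q b j) with hGB
  set GQ := ∑ i ∈ Finset.Icc 1 Q, G i with hGQ
  -- lower bound on E
  have h1 : 2^d * SQ + X1 + (GB + a * GQ) ≤ E := by
    have hlow := eCount_lower d Q r hd hQ S hS
    have hsplit := root_sum_split Q r hQ G
    rw [hsplit] at hlow
    exact hlow
  -- concavity bounds
  have h2 : M * T ≤ d * X1 := by
    rw [hT, hX1d, Finset.mul_sum, Finset.mul_sum]
    apply Finset.sum_le_sum
    intro v hv
    have htle : tv v ≤ d := by
      rw [htv]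
      calc (Finset.Icc (v-d) (v-1) ∩ S).card ≤ (Finset.Icc (v-d) (v-1)).card :=
            Finset.card_le_card (Finset.inter_subset_left)
        _ ≤ d := by
            rw [Nat.card_Icc]
            omega
    calc M * tv v = tv v * M := Nat.mul_comm _ _
      _ ≤ d * (2^d - 2^(d - tv v)) := concav d (tv v) htle
  have hsloc : ∀ i, (sigmaB d i ∩ S).card ≤ d := by
    intro i
    calc (sigmaB d i ∩ S).card ≤ (sigmaB d i).card :=
          Finset.card_le_card (Finset.inter_subset_left)
      _ = d := card_sigmaB d i
  have h3 : M * SB ≤ d * GB := by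
    rw [hSB, hGB, Finset.mul_sum, Finset.mul_sum]
    apply Finset.sum_le_sum
    intro j _
    calc M * (sigmaB d (Ispec Q b j) ∩ S).card
        = (sigmaB d (Ispec Q b j) ∩ S).card * M := Nat.mul_comm _ _
      _ ≤ d * G (Ispec Q b j) := concav d _ (hsloc _)
  have h4 : M * SQ ≤ d * GQ := by
    have hsum : ∑ i ∈ Finset.Icc 1 Q, (S ∩ sigmaB d i).card = SQ :=
      sum_blocks_card d Q hd S hS
    rw [hGQ, Finset.mul_sum, ← hsum, Finset.mul_sum]
    apply Finset.sum_le_sum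
    intro i _
    rw [Finset.inter_comm]
    calc M * (sigmaB d i ∩ S).card = (sigmaB d i ∩ S).card * M := Nat.mul_comm _ _
      _ ≤ d * G i := concav d _ (hsloc _)
  -- the dagger bound
  have h5 : b * SQ ≤ Q * T + Q * SB := by
    rcases Nat.eq_zero_or_pos b with hb0 | hbpos
    · rw [hb0]; omega
    have hbQ : b < Q := by rw [hb]; exact Nat.mod_lt r (by omega)
    have hdag := dagger d Q b hd hbpos hbQ S hS
    -- identification of the special count
    have hspec : (Cd.filter (specP d Q b)).card
        = ∑ j ∈ Finset.Icc 1 b, (Cd ∩ sigmaB d (Ispec Q b j)).card := by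
      have hbU : Cd.filter (specP d Q b)
          = (Finset.Icc 1 b).biUnion (fun j => Cd ∩ sigmaB d (Ispec Q b j)) := by
        ext v
        rw [Finset.mem_filter, Finset.mem_biUnion]
        constructor
        · intro ⟨hvCd, hvspec⟩
          have hv1 : 1 ≤ v := by
            rw [hCd, Finset.mem_sdiff, Finset.mem_Icc] at hvCd
            omega
          obtain ⟨j, hj1, hjb, hsig⟩ := mem_sigmaB_of_spec d Q b v hd hv1 hvspec
          exact ⟨j, Finset.mem_Icc.2 ⟨hj1, hjb⟩, Finset.mem_inter.2 ⟨hvCd, hsig⟩⟩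
        · intro ⟨j, hj, hv⟩
          rw [Finset.mem_inter] at hv
          refine ⟨hv.1, ?_⟩
          have hv1 : 1 ≤ v := by
            rw [hCd, Finset.mem_sdiff, Finset.mem_Icc] at hv
            omega
          unfold specP
          rw [(mem_sigmaB_iff d _ v hd hv1).1 hv.2]
          rw [Finset.mem_Icc] at hj
          exact Finset.mem_image.2 ⟨j, Finset.mem_Icc.2 hj, rfl⟩
      rw [hbU]
      apply Finset.card_biUnion
      intro j₁ h₁ j₂ h₂ hne
      rw [Finset.mem_coe, Finset.mem_Icc] at h₁ h₂
      have hII : Ispec Q b j₁ ≠ Ispec Q b j₂ := by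
        rcases Nat.lt_or_ge j₁ j₂ with h | h
        · exact (Ispec_lt_of_lt Q b j₁ j₂ hbpos (by omega) h).ne
        · have : j₂ < j₁ := by omega
          exact (Ispec_lt_of_lt Q b j₂ j₁ hbpos (by omega) this).ne'
      rw [Function.onFun, Finset.disjoint_left]
      intro v hv₁ hv₂
      rw [Finset.mem_inter] at hv₁ hv₂
      have hv1 : 1 ≤ v := by
        have := hv₁.1
        rw [hCd, Finset.mem_sdiff, Finset.mem_Icc] at this
        omega
      exact hII ((mem_sigmaB_iff d _ v hd hv1).1 hv₁.2 ▸
        ((mem_sigmaB_iff d _ v hd hv1).1 hv₂.2).symm ▸ rfl)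
    -- per-block partition
    have hpart : ∀ j ∈ Finset.Icc 1 b, (Cd ∩ sigmaB d (Ispec Q b j)).card
        + (sigmaB d (Ispec Q b j) ∩ S).card = d := by
      intro j hj
      rw [Finset.mem_Icc] at hj
      have hσU : sigmaB d (Ispec Q b j) ⊆ Finset.Icc (d+1) n :=
        sigmaB_subset_U d Q _ hd (Ispec_pos Q b j hbpos hQ hj.1)
          (Ispec_le_Q Q b j hbpos hj.2)
      have hCdσ : Cd ∩ sigmaB d (Ispec Q b j) = sigmaB d (Ispec Q b j) \ S := by
        ext v
        rw [Finset.mem_inter, hCd, Finset.mem_sdiff, Finset.mem_sdiff]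
        constructor
        · intro ⟨⟨_, hvS⟩, hvσ⟩
          exact ⟨hvσ, hvS⟩
        · intro ⟨hvσ, hvS⟩
          exact ⟨⟨hσU hvσ, hvS⟩, hvσ⟩
      rw [hCdσ]
      have hfin := Finset.card_sdiff_add_card_inter (sigmaB d (Ispec Q b j)) S
      rw [card_sigmaB] at hfin
      exact hfin
    have hsum_part : (∑ j ∈ Finset.Icc 1 b, (Cd ∩ sigmaB d (Ispec Q b j)).card) + SB
        = b * d := by
      rw [hSB, ← Finset.sum_add_distrib]
      rw [Finset.sum_congr rfl hpart, Finset.sum_const, Nat.card_Icc, smul_eq_mul]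
      have hsimp : b + 1 - 1 = b := by omega
      rw [hsimp]
    have hcards : SQ + Cd.card = d * Q := by
      rw [hCd, hSQ]
      have h6 := Finset.card_sdiff_add_card_inter (Finset.Icc (d+1) n) S
      have h7 : Finset.Icc (d+1) n ∩ S = S := by
        rw [Finset.inter_comm]
        exact Finset.inter_eq_left.2 hS
      rw [h7] at h6
      have h8 : (Finset.Icc (d+1) n).card = d * Q := by
        rw [Nat.card_Icc, hn]
        have : d * (Q+1) = d * Q + d := by ring
        omega
      omega
    -- dagger in terms of T, δ; conclude
    rw [hspec] at hdag
    set DB := ∑ j ∈ Finset.Icc 1 b, (Cd ∩ sigmaB d (Ispec Q b j)).card with hDB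
    have hdag' : Q * DB ≤ Q * T + b * Cd.card := hdag
    clear hdag
    have e1 : Q * DB + Q * SB = Q * (b * d) := by
      rw [← Nat.mul_add, hsum_part]
    have e2 : b * SQ + b * Cd.card = b * (d * Q) := by
      rw [← Nat.mul_add, hcards]
    have e3 : Q * (b * d) = b * (d * Q) := by ring
    omega
  -- final assembly
  have hdm : Q * a + b = r := Nat.div_add_mod r Q
  have c1 : d * Q * (2^d * SQ) + d * Q * X1 + d * Q * GB + d * Q * (a * GQ)
      ≤ d * Q * E := by
    have := Nat.mul_le_mul_left (d * Q) h1
    calc d * Q * (2^d * SQ) + d * Q * X1 + d * Q * GB + d * Q * (a * GQ)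
        = d * Q * (2^d * SQ + X1 + (GB + a * GQ)) := by ring
      _ ≤ d * Q * E := this
  have c2 : Q * (M * T) ≤ d * Q * X1 := by
    calc Q * (M * T) ≤ Q * (d * X1) := Nat.mul_le_mul_left Q h2
      _ = d * Q * X1 := by ring
  have c3 : Q * (M * SB) ≤ d * Q * GB := by
    calc Q * (M * SB) ≤ Q * (d * GB) := Nat.mul_le_mul_left Q h3
      _ = d * Q * GB := by ring
  have c4 : a * Q * (M * SQ) ≤ d * Q * (a * GQ) := by
    calc a * Q * (M * SQ) ≤ a * Q * (d * GQ) := Nat.mul_le_mul_left (a * Q) h4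
      _ = d * Q * (a * GQ) := by ring
  have c5 : M * (b * SQ) ≤ M * (Q * T) + M * (Q * SB) := by
    calc M * (b * SQ) ≤ M * (Q * T + Q * SB) := Nat.mul_le_mul_left M h5
      _ = M * (Q * T) + M * (Q * SB) := by rw [Nat.mul_add]
  have egoal : SQ * (d * Q * 2^d + r * M) = d * Q * (2^d * SQ) + a * Q * (M * SQ)
      + M * (b * SQ) := by
    rw [← hdm]
    ring
  have ecomm1 : M * (Q * T) = Q * (M * T) := by ring
  have ecomm2 : M * (Q * SB) = Q * (M * SB) := by ring
  omega

end TrAux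

/-- **Lemma (structure of maximal minimizers).** Let `d, Q ≥ 1` and `r ≥ 0`.  If `S` is
a nonempty set of unrooted vertices of `T_r` of minimal density, of maximum cardinality
among such minimizers, then for every `1 ≤ i ≤ Q` either `S ∩ σ_i = ∅` or `σ_i ⊆ S`;
that is, `S` is a union of some of the blocks `σ_1, …, σ_Q`. -/
theorem Tr_minimizer_blocks (d Q r : ℕ) (hd : 1 ≤ d) (hQ : 1 ≤ Q)
    (S : Finset ℕ) (hSU : S ⊆ unrooted d Q r) (hSne : S.Nonempty)
    (hmin : ∀ S' ⊆ unrooted d Q r, S'.Nonempty →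
      dens (Tr d Q r) S ≤ dens (Tr d Q r) S')
    (hmax : ∀ S' ⊆ unrooted d Q r, S'.Nonempty →
      dens (Tr d Q r) S' = dens (Tr d Q r) S → S'.card ≤ S.card) :
    ∀ i : ℕ, 1 ≤ i → i ≤ Q → S ∩ sigmaB d i = ∅ ∨ sigmaB d i ⊆ S := by
  have hU : unrooted d Q r = Finset.Icc (d+1) (d*(Q+1)) := TrAux.unrooted_eq d Q r hd hQ
  set U := Finset.Icc (d+1) (d*(Q+1)) with hUdef
  have hSU' : S ⊆ U := by rw [← hU]; exact hSU
  have hmul : d * (Q+1) = d * Q + d := by ring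
  have hdQpos : 0 < d * Q := Nat.mul_pos (by omega) (by omega)
  have hUcard : U.card = d * Q := by
    rw [hUdef, Nat.card_Icc]
    omega
  have hUne : U.Nonempty := by
    rw [hUdef]
    rw [Finset.nonempty_Icc]
    omega
  have hkey := TrAux.key_ineq d Q r hd hQ S hSU'
  have hup := TrAux.eCount_upper d Q r hd hQ U (by rw [hUdef])
  have hSpos : 0 < S.card := Finset.card_pos.2 hSne
  have h3 : eCount (Tr d Q r) U * S.card ≤ eCount (Tr d Q r) S * U.card := by
    calc eCount (Tr d Q r) U * S.card
        ≤ (d * Q * 2^d + r * (2^d - 1)) * S.card := Nat.mul_le_mul_right _ hup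
      _ = S.card * (d * Q * 2^d + r * (2^d - 1)) := Nat.mul_comm _ _
      _ ≤ (d * Q) * eCount (Tr d Q r) S := hkey
      _ = eCount (Tr d Q r) S * (d * Q) := Nat.mul_comm _ _
      _ = eCount (Tr d Q r) S * U.card := by rw [hUcard]
  have hdensLe : dens (Tr d Q r) U ≤ dens (Tr d Q r) S := by
    unfold dens
    rw [div_le_div_iff₀]
    · exact_mod_cast h3
    · rw [hUcard]; exact_mod_cast hdQpos
    · exact_mod_cast hSpos
  have hge : dens (Tr d Q r) S ≤ dens (Tr d Q r) U := hmin U (by rw [hU]) hUne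
  have heq : dens (Tr d Q r) U = dens (Tr d Q r) S := le_antisymm hdensLe hge
  have hcardle : U.card ≤ S.card := hmax U (by rw [hU]) hUne heq
  have hfin : S = U := Finset.eq_of_subset_of_card_le hSU' hcardle
  intro i hi1 hiQ
  right
  rw [hfin]
  exact TrAux.sigmaB_subset_U d Q i hd hi1 hiQ
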